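/- Let q ≥ 2 be an integer. Define g : ℤ≥0 × ℝ≥0 → ℝ by g(r, t) = q^{-r/2} I_r(2√q t) − (q−1) ∑_{j=1}^∞ q^{-(r+2j)/2} I_{r+2j}(2√q t). Then for all t > 0, the function g satisfies the tree heat-equation relations: (q+1)·g(1,t) = ∂_t g(0,t), and for every r ≥ 1, q·g(r+1,t) + g(r−1,t) = ∂_t g(r,t). -/

import Mathlib

open Real

/-- Modified Bessel function of the first kind of integer order `r ≥ 0`,
defined by its power series. -/
noncomputable def besselI (r : ℕ) (t : ℝ) : ℝ :=
  ∑' n : ℕ, (t / 2) ^ (2 * n + r) / (n.factorial * (n + r).factorial)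

lemma besselI_def (r : ℕ) (t : ℝ) :
    besselI r t = ∑' n : ℕ, (t / 2) ^ (2 * n + r) / (n.factorial * (n + r).factorial) := rfl

lemma fact_le_fact_add (n r : ℕ) : (r.factorial : ℝ) ≤ ((n + r).factorial : ℝ) := by
  exact_mod_cast Nat.factorial_le (Nat.le_add_left r n)

lemma besselI_term_bound (r n : ℕ) (x A : ℝ) (hx : |x| ≤ 2 * A) :
    |(x / 2) ^ (2 * n + r) / (n.factorial * (n + r).factorial)| ≤
      A ^ r / r.factorial * ((A ^ 2) ^ n / n.factorial) := by
  have hA : 0 ≤ A := by nlinarith [abs_nonneg x]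
  have h1 : |x / 2| ≤ A := by rw [abs_div]; simp only [abs_two]; linarith [abs_nonneg x]
  have h2 : |(x / 2) ^ (2 * n + r)| ≤ A ^ (2 * n + r) := by
    rw [abs_pow]; exact pow_le_pow_left₀ (abs_nonneg _) h1 _
  have hfpos : (0:ℝ) < (n.factorial : ℝ) * (n + r).factorial := by positivity
  rw [abs_div, abs_of_pos hfpos]
  have key : A ^ r / r.factorial * ((A ^ 2) ^ n / n.factorial)
      = A ^ (2 * n + r) / ((n.factorial : ℝ) * r.factorial) := by
    rw [pow_add, ← pow_mul]; ring
  rw [key]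
  have step1 : |(x / 2) ^ (2 * n + r)| / ((n.factorial : ℝ) * (n + r).factorial)
      ≤ A ^ (2 * n + r) / ((n.factorial : ℝ) * (n + r).factorial) := by
    gcongr
  refine step1.trans ?_
  have h3 : (0:ℝ) < (n.factorial : ℝ) * r.factorial := by positivity
  apply div_le_div_of_nonneg_left (by positivity) h3
  have := fact_le_fact_add n r
  have h4 : (0:ℝ) < (n.factorial : ℝ) := by positivity
  nlinarith

lemma summable_besselI_terms (r : ℕ) (x : ℝ) :
    Summable (fun n : ℕ => (x / 2) ^ (2 * n + r) / (n.factorial * (n + r).factorial : ℝ)) := by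
  apply Summable.of_norm_bounded
    (g := fun n : ℕ => |x| ^ r / r.factorial * ((|x| ^ 2) ^ n / n.factorial))
  · exact (Real.summable_pow_div_factorial (|x| ^ 2)).mul_left _
  · intro n
    exact besselI_term_bound r n x |x| (by nlinarith [abs_nonneg x])

lemma abs_besselI_le (r : ℕ) (x A : ℝ) (hx : |x| ≤ 2 * A) :
    |besselI r x| ≤ A ^ r / r.factorial * ∑' n : ℕ, (A ^ 2) ^ n / n.factorial := by
  have hsum := summable_besselI_terms r x
  rw [besselI]
  have h1 : |∑' n : ℕ, (x / 2) ^ (2 * n + r) / (n.factorial * (n + r).factorial : ℝ)|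
      ≤ ∑' n : ℕ, |(x / 2) ^ (2 * n + r) / (n.factorial * (n + r).factorial : ℝ)| := by
    have := norm_tsum_le_tsum_norm (f := fun n : ℕ => (x / 2) ^ (2 * n + r) / (n.factorial * (n + r).factorial : ℝ)) (by simp only [Real.norm_eq_abs]; exact hsum.abs)
    simp only [Real.norm_eq_abs] at this
    exact this
  refine h1.trans ?_
  have h2 : ∑' n : ℕ, |(x / 2) ^ (2 * n + r) / (n.factorial * (n + r).factorial : ℝ)|
      ≤ ∑' n : ℕ, A ^ r / r.factorial * ((A ^ 2) ^ n / n.factorial) := by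
    apply Summable.tsum_le_tsum _ hsum.abs ((Real.summable_pow_div_factorial (A ^ 2)).mul_left _)
    intro n
    exact besselI_term_bound r n x A hx
  refine h2.trans ?_
  rw [tsum_mul_left]

noncomputable def bterm (r n : ℕ) (y : ℝ) : ℝ :=
  (y / 2) ^ (2 * n + r) / (n.factorial * (n + r).factorial)

noncomputable def bterm' (r n : ℕ) (y : ℝ) : ℝ :=
  ((2 * n + r : ℕ) : ℝ) * (y / 2) ^ (2 * n + r - 1) * (2⁻¹) / (n.factorial * (n + r).factorial)

lemma hasDerivAt_bterm (r n : ℕ) (y : ℝ) :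
    HasDerivAt (fun z => bterm r n z) (bterm' r n y) y := by
  have h1 : HasDerivAt (fun z : ℝ => z / 2) (2⁻¹) y := by
    simpa using (hasDerivAt_id y).div_const 2
  have h2 := (h1.pow (2 * n + r)).div_const ((n.factorial : ℝ) * (n + r).factorial)
  simpa [bterm, bterm'] using h2

lemma bterm'_bound (r n : ℕ) (R : ℝ) (hR : 1 ≤ R) (y : ℝ) (hy : |y| ≤ R) :
    |bterm' r n y| ≤ (2 * R) ^ (2 * n + r) / n.factorial := by
  have hR0 : (0:ℝ) < R := lt_of_lt_of_le one_pos hR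
  set k := 2 * n + r with hk
  have h1 : |y / 2| ≤ R := by
    rw [abs_div, abs_two, div_le_iff₀ (by norm_num : (0:ℝ) < 2)]; nlinarith
  have h2 : |y / 2| ^ (k - 1) ≤ R ^ k :=
    (pow_le_pow_left₀ (abs_nonneg _) h1 _).trans (pow_le_pow_right₀ hR (Nat.sub_le k 1))
  have h4 : ((k:ℕ):ℝ) ≤ 2 ^ k := by exact_mod_cast (Nat.lt_two_pow_self (n := k)).le
  have e : |bterm' r n y| =
      ((k:ℕ):ℝ) * |y / 2| ^ (k - 1) * 2⁻¹ / ((n.factorial : ℝ) * (n + r).factorial) := by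
    rw [bterm', abs_div, abs_mul, abs_mul, abs_pow]
    congr 1
    · congr 2
      · exact abs_of_nonneg (by positivity)
      · norm_num
    · exact abs_of_pos (by positivity)
  rw [e]
  have hd : (n.factorial : ℝ) * 1 ≤ (n.factorial : ℝ) * (n + r).factorial := by
    have h5 : (1:ℝ) ≤ ((n + r).factorial : ℝ) := by exact_mod_cast (n + r).factorial_pos
    have h6 : (0:ℝ) < (n.factorial : ℝ) := by exact_mod_cast n.factorial_pos
    nlinarith
  calc ((k:ℕ):ℝ) * |y / 2| ^ (k - 1) * 2⁻¹ / ((n.factorial : ℝ) * (n + r).factorial)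
      ≤ 2 ^ k * R ^ k * 1 / ((n.factorial : ℝ) * 1) := by
        gcongr
        norm_num
    _ = (2 * R) ^ k / n.factorial := by rw [mul_pow]; ring

lemma summable_u (r : ℕ) (R : ℝ) :
    Summable (fun n : ℕ => (2 * R) ^ (2 * n + r) / (n.factorial : ℝ)) := by
  have : ∀ n : ℕ, (2 * R) ^ (2 * n + r) / (n.factorial : ℝ)
      = (2 * R) ^ r * (((2 * R) ^ 2) ^ n / n.factorial) := by
    intro n; rw [pow_add, ← pow_mul]; ring
  simpa [this] using (Real.summable_pow_div_factorial ((2 * R) ^ 2)).mul_left ((2 * R) ^ r)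

lemma summable_bterm' (r : ℕ) (x : ℝ) : Summable (fun n : ℕ => bterm' r n x) := by
  apply Summable.of_norm_bounded (g := fun n : ℕ => (2 * (|x| + 1)) ^ (2 * n + r) / (n.factorial : ℝ))
    (summable_u r (|x| + 1))
  intro n
  exact bterm'_bound r n (|x| + 1) (by linarith [abs_nonneg x]) x (by linarith)

lemma hasDerivAt_besselI (r : ℕ) (x : ℝ) :
    HasDerivAt (fun y => besselI r y) (∑' n : ℕ, bterm' r n x) x := by
  have hb : (fun y => besselI r y) = fun y => ∑' n : ℕ, bterm r n y := by
    funext y; rw [besselI_def]; rfl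
  rw [hb]
  set R := |x| + 1 with hRdef
  have hR : 1 ≤ R := by have := abs_nonneg x; simp only [hRdef]; linarith
  have hxmem : x ∈ Metric.ball (0:ℝ) R := by
    simp only [Metric.mem_ball, Real.dist_eq, sub_zero, hRdef]
    linarith [abs_nonneg x]
  refine hasDerivAt_tsum_of_isPreconnected
    (u := fun n : ℕ => (2 * R) ^ (2 * n + r) / (n.factorial : ℝ))
    (summable_u r R) Metric.isOpen_ball (convex_ball (0:ℝ) R).isPreconnected
    (fun n y _ => hasDerivAt_bterm r n y) (fun n y hy => ?_) hxmem ?_ hxmem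
  · simp only [Metric.mem_ball, Real.dist_eq, sub_zero] at hy
    simpa using bterm'_bound r n R hR y hy.le
  · exact summable_besselI_terms r x

lemma tsum_bterm'_zero (x : ℝ) : ∑' n : ℕ, bterm' 0 n x = besselI 1 x := by
  rw [Summable.tsum_eq_zero_add (summable_bterm' 0 x)]
  have h0 : bterm' 0 0 x = 0 := by simp [bterm']
  rw [h0, zero_add, besselI_def]
  apply tsum_congr
  intro n
  have hn : ((n.factorial : ℝ)) ≠ 0 := by positivity
  have hn1 : (((n+1).factorial : ℝ)) ≠ 0 := by positivity
  simp only [bterm', Nat.add_zero]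
  rw [show 2 * (n + 1) - 1 = 2 * n + 1 from by omega,
    show 2 * (n + 1) = (2 * n + 1) + 1 from by omega,
    Nat.factorial_succ (n)]
  push_cast
  field_simp
  ring

lemma tsum_bterm'_succ (r : ℕ) (x : ℝ) :
    ∑' n : ℕ, bterm' (r + 1) n x = (besselI r x + besselI (r + 2) x) / 2 := by
  set G : ℕ → ℝ := fun n => Nat.casesOn n 0 (fun m => bterm (r + 2) m x / 2) with hG
  have hGsum : Summable G := by
    rw [← summable_nat_add_iff 1]
    exact ((summable_besselI_terms (r + 2) x).div_const 2)
  have key : ∀ n : ℕ, bterm' (r + 1) n x = bterm r n x / 2 + G n := by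
    intro n
    cases n with
    | zero =>
      have hr : ((r.factorial : ℝ)) ≠ 0 := by positivity
      have hr1 : (((r+1).factorial : ℝ)) ≠ 0 := by positivity
      simp only [bterm, bterm', hG, Nat.rec_zero]
      rw [show 2 * 0 + (r + 1) - 1 = 2 * 0 + r from by omega,
        show (0 : ℕ) + (r + 1) = (0 + r) + 1 from by omega,
        Nat.factorial_succ (0 + r)]
      push_cast
      field_simp
      ring
    | succ m =>
      have h1 : ((m.factorial : ℝ)) ≠ 0 := by positivity
      have h2 : (((m+1).factorial : ℝ)) ≠ 0 := by positivity
      have h3 : (((m+r+1).factorial : ℝ)) ≠ 0 := by positivity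
      have h4 : (((m+r+2).factorial : ℝ)) ≠ 0 := by positivity
      simp only [bterm, bterm', hG]
      rw [show 2 * (m + 1) + (r + 1) - 1 = 2 * m + r + 2 from by omega,
        show 2 * (m + 1) + (r + 1) = (2 * m + r + 2) + 1 from by omega,
        show 2 * (m + 1) + r = 2 * m + r + 2 from by omega,
        show 2 * m + (r + 2) = 2 * m + r + 2 from by omega,
        show (m + 1) + (r + 1) = (m + r + 1) + 1 from by omega,
        show (m + 1) + r = m + r + 1 from by omega,
        show m + (r + 2) = (m + r + 1) + 1 from by omega,
        Nat.factorial_succ (m + r + 1), Nat.factorial_succ m]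
      push_cast
      field_simp
      ring
  calc ∑' n : ℕ, bterm' (r + 1) n x = ∑' n : ℕ, (bterm r n x / 2 + G n) := tsum_congr key
    _ = (∑' n : ℕ, bterm r n x / 2) + ∑' n : ℕ, G n :=
        Summable.tsum_add ((summable_besselI_terms r x).div_const 2) hGsum
    _ = (besselI r x + besselI (r + 2) x) / 2 := by
        rw [tsum_div_const, Summable.tsum_eq_zero_add hGsum]
        have : (∑' n : ℕ, G (n + 1)) = besselI (r + 2) x / 2 := by
          rw [besselI_def, ← tsum_div_const]
          exact tsum_congr fun n => rfl
        rw [this]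
        have hb : (∑' n : ℕ, bterm r n x) = besselI r x := by rw [besselI_def]; rfl
        rw [hb]
        simp [hG]
        ring

/-- The radial function `g(r,t) = q^{-r/2} I_r(2√q t) - (q-1) ∑_{j≥1} q^{-(r+2j)/2} I_{r+2j}(2√q t)`. -/
noncomputable def treeG (q : ℕ) (r : ℕ) (t : ℝ) : ℝ :=
  (q : ℝ) ^ (-(r : ℝ) / 2) * besselI r (2 * Real.sqrt q * t) -
    ((q : ℝ) - 1) *
      ∑' j : ℕ, (q : ℝ) ^ (-((r : ℝ) + 2 * ((j : ℝ) + 1)) / 2) *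
        besselI (r + 2 * (j + 1)) (2 * Real.sqrt q * t)

noncomputable def tailF (q r j : ℕ) (s : ℝ) : ℝ :=
  (q : ℝ) ^ (-((r : ℝ) + 2 * ((j : ℝ) + 1)) / 2) * besselI (r + 2 * (j + 1)) (2 * Real.sqrt q * s)

lemma treeG_eq (q r : ℕ) (s : ℝ) :
    treeG q r s = (q : ℝ) ^ (-(r : ℝ) / 2) * besselI r (2 * Real.sqrt q * s) -
      ((q : ℝ) - 1) * ∑' j : ℕ, tailF q r j s := rfl

lemma rpow_coef (q : ℕ) (hq : 1 ≤ q) (k : ℕ) :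
    (q : ℝ) ^ (-(k : ℝ) / 2) = ((Real.sqrt q)⁻¹) ^ k := by
  have hq0 : (0:ℝ) < (q:ℝ) := by exact_mod_cast Nat.lt_of_lt_of_le Nat.zero_lt_one hq
  rw [Real.sqrt_eq_rpow, ← Real.rpow_neg hq0.le, ← Real.rpow_natCast ((q:ℝ) ^ (-(1/2 : ℝ))) k,
    ← Real.rpow_mul hq0.le]
  congr 1
  ring

lemma tailF_eq (q : ℕ) (hq : 1 ≤ q) (r j : ℕ) (s : ℝ) :
    tailF q r j s = ((Real.sqrt q)⁻¹) ^ (r + 2 * (j + 1)) *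
      besselI (r + 2 * (j + 1)) (2 * Real.sqrt q * s) := by
  rw [tailF, show (-(((r:ℕ):ℝ) + 2 * ((j:ℝ) + 1)) / 2) = -(((r + 2*(j+1) : ℕ)):ℝ)/2 from by
    push_cast; ring, rpow_coef q hq]

section Tree

variable (q : ℕ) (hq : 2 ≤ q)

lemma sqrtq_one_le (hq : 2 ≤ q) : 1 ≤ Real.sqrt q := by
  rw [show (1:ℝ) = Real.sqrt 1 from (Real.sqrt_one).symm]
  apply Real.sqrt_le_sqrt
  exact_mod_cast Nat.one_le_of_lt hq

lemma p_le_one (hq : 2 ≤ q) : (Real.sqrt q)⁻¹ ≤ 1 :=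
  inv_le_one_of_one_le₀ (sqrtq_one_le q hq)

lemma p_nonneg : 0 ≤ (Real.sqrt q)⁻¹ := inv_nonneg.mpr (Real.sqrt_nonneg _)

lemma summable_aux (hq : 2 ≤ q) (a b : ℕ) (t : ℝ) :
    Summable (fun j : ℕ => ((Real.sqrt q)⁻¹) ^ (2 * j + a) *
      besselI (2 * j + b) (2 * Real.sqrt q * t)) := by
  set A := Real.sqrt q * |t| with hA
  have hA0 : 0 ≤ A := by positivity
  set M := max A 1 with hM
  have hM1 : 1 ≤ M := le_max_right _ _
  have hM0 : 0 ≤ M := le_trans zero_le_one hM1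
  have hAM : A ≤ M := le_max_left _ _
  set E := ∑' n : ℕ, (A ^ 2) ^ n / (n.factorial : ℝ) with hE
  have hE0 : 0 ≤ E := tsum_nonneg fun n => by positivity
  apply Summable.of_norm_bounded (g := fun j : ℕ => (M ^ b * E) * ((M ^ 2) ^ j / j.factorial))
  · exact (Real.summable_pow_div_factorial (M ^ 2)).mul_left _
  · intro j
    have hxA : |2 * Real.sqrt q * t| ≤ 2 * A := by
      rw [abs_mul, abs_mul]
      simp only [abs_two, abs_of_nonneg (Real.sqrt_nonneg (q:ℝ))]
      rw [hA]; ring_nf; exact le_refl _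
    have hbI : |besselI (2 * j + b) (2 * Real.sqrt q * t)| ≤
        A ^ (2 * j + b) / ((2 * j + b).factorial : ℝ) * E :=
      abs_besselI_le _ _ _ hxA
    have hp : |((Real.sqrt q)⁻¹) ^ (2 * j + a)| ≤ 1 := by
      rw [abs_pow, abs_of_nonneg (p_nonneg q)]
      exact pow_le_one₀ (p_nonneg q) (p_le_one q hq)
    have hfact : ((j.factorial : ℝ)) ≤ (((2 * j + b).factorial : ℝ)) := by
      exact_mod_cast Nat.factorial_le (by omega)
    have hbound : A ^ (2 * j + b) / ((2 * j + b).factorial : ℝ) * E ≤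
        (M ^ b * E) * ((M ^ 2) ^ j / j.factorial) := by
      have h1 : A ^ (2 * j + b) ≤ M ^ (2 * j + b) := pow_le_pow_left₀ hA0 hAM _
      have h2 : A ^ (2 * j + b) / ((2 * j + b).factorial : ℝ) ≤
          M ^ (2 * j + b) / (j.factorial : ℝ) := by
        apply div_le_div₀ (by positivity) h1 (by positivity) hfact
      have h3 : (M ^ b * E) * ((M ^ 2) ^ j / j.factorial)
          = M ^ (2 * j + b) / (j.factorial : ℝ) * E := by
        rw [← pow_mul, pow_add]
        ring
      rw [h3]
      exact mul_le_mul_of_nonneg_right h2 hE0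
    calc ‖((Real.sqrt q)⁻¹) ^ (2 * j + a) * besselI (2 * j + b) (2 * Real.sqrt q * t)‖
        = |((Real.sqrt q)⁻¹) ^ (2 * j + a)| * |besselI (2 * j + b) (2 * Real.sqrt q * t)| := by
          rw [Real.norm_eq_abs, abs_mul]
      _ ≤ 1 * (A ^ (2 * j + b) / ((2 * j + b).factorial : ℝ) * E) := by
          apply mul_le_mul hp hbI (abs_nonneg _) zero_le_one
      _ ≤ (M ^ b * E) * ((M ^ 2) ^ j / j.factorial) := by rw [one_mul]; exact hbound

lemma summable_tailF (hq : 2 ≤ q) (r : ℕ) (t : ℝ) :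
    Summable (fun j : ℕ => tailF q r j t) := by
  apply (summable_aux q hq (r + 2) (r + 2) t).congr
  intro j
  rw [tailF_eq q (by omega) r j t, show r + 2 * (j + 1) = 2 * j + (r + 2) from by ring]

end Tree

noncomputable def tailF' (q r j : ℕ) (t : ℝ) : ℝ :=
  (q : ℝ) ^ (-((r : ℝ) + 2 * ((j : ℝ) + 1)) / 2) *
    ((besselI (r + 2 * j + 1) (2 * Real.sqrt q * t) +
      besselI (r + 2 * j + 3) (2 * Real.sqrt q * t)) / 2 * (2 * Real.sqrt q))

lemma hasDerivAt_tailF (q r j : ℕ) (t : ℝ) :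
    HasDerivAt (fun s => tailF q r j s) (tailF' q r j t) t := by
  have hc : HasDerivAt (fun s : ℝ => 2 * Real.sqrt q * s) (2 * Real.sqrt q) t := by
    simpa using (hasDerivAt_id t).const_mul (2 * Real.sqrt q)
  have hI := hasDerivAt_besselI (r + 2 * (j + 1)) (2 * Real.sqrt q * t)
  have h2 := (hI.comp t hc).const_mul ((q : ℝ) ^ (-((r : ℝ) + 2 * ((j : ℝ) + 1)) / 2))
  have hk : r + 2 * (j + 1) = (r + 2 * j + 1) + 1 := by ring
  rw [hk, tsum_bterm'_succ] at h2
  have hk2 : (r + 2 * j + 1) + 2 = r + 2 * j + 3 := by ring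
  rw [hk2] at h2
  unfold tailF tailF'
  rw [hk]
  exact h2

lemma tailF'_bound (q : ℕ) (hq : 2 ≤ q) (r j : ℕ) (R : ℝ) (hR : 1 ≤ R) (s : ℝ) (hs : |s| ≤ R) :
    |tailF' q r j s| ≤ (2 * Real.sqrt q * ((Real.sqrt q * R) ^ (r + 3) *
        ∑' n : ℕ, ((Real.sqrt q * R) ^ 2) ^ n / (n.factorial : ℝ))) *
      (((Real.sqrt q * R) ^ 2) ^ j / (j.factorial : ℝ)) := by
  set A := Real.sqrt q * R with hA
  have hsq1 : 1 ≤ Real.sqrt q := sqrtq_one_le q hq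
  have hA1 : 1 ≤ A := by nlinarith
  have hA0 : 0 ≤ A := le_trans zero_le_one hA1
  set E := ∑' n : ℕ, (A ^ 2) ^ n / (n.factorial : ℝ) with hE
  have hE0 : 0 ≤ E := tsum_nonneg fun n => by positivity
  have hxA : |2 * Real.sqrt q * s| ≤ 2 * A := by
    rw [abs_mul, abs_mul]
    simp only [abs_two, abs_of_nonneg (Real.sqrt_nonneg (q:ℝ))]
    rw [hA, mul_assoc]
    have : Real.sqrt q * |s| ≤ Real.sqrt q * R :=
      mul_le_mul_of_nonneg_left hs (Real.sqrt_nonneg _)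
    nlinarith [Real.sqrt_nonneg (q:ℝ)]
  have key : ∀ b : ℕ, r + 2 * j + 1 ≤ b → b ≤ r + 2 * j + 3 →
      |besselI b (2 * Real.sqrt q * s)| ≤ A ^ (r + 2 * j + 3) / (j.factorial : ℝ) * E := by
    intro b hb1 hb2
    refine (abs_besselI_le b _ A hxA).trans ?_
    apply mul_le_mul_of_nonneg_right _ hE0
    apply div_le_div₀ (by positivity) (pow_le_pow_right₀ hA1 hb2) (by positivity)
    exact_mod_cast Nat.factorial_le (by omega)
  have hcoef : |(q : ℝ) ^ (-((r : ℝ) + 2 * ((j : ℝ) + 1)) / 2)| ≤ 1 := by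
    rw [show (-(((r:ℕ):ℝ) + 2 * ((j:ℝ) + 1)) / 2) = -(((r + 2*(j+1) : ℕ)):ℝ)/2 from by
      push_cast; ring, rpow_coef q (by omega)]
    rw [abs_pow, abs_of_nonneg (p_nonneg q)]
    exact pow_le_one₀ (p_nonneg q) (p_le_one q hq)
  have h1 := key _ (le_refl _) (by omega)
  have h2 := key (r + 2 * j + 3) (by omega) (le_refl _)
  have hmain : |(besselI (r + 2 * j + 1) (2 * Real.sqrt q * s) +
      besselI (r + 2 * j + 3) (2 * Real.sqrt q * s)) / 2 * (2 * Real.sqrt q)| ≤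
      (2 * Real.sqrt q) * (A ^ (r + 2 * j + 3) / (j.factorial : ℝ) * E) := by
    have hc2 : |2 * Real.sqrt q| = 2 * Real.sqrt q := abs_of_nonneg (by positivity)
    have hX : |(besselI (r + 2 * j + 1) (2 * Real.sqrt q * s) +
        besselI (r + 2 * j + 3) (2 * Real.sqrt q * s)) / 2| ≤
        A ^ (r + 2 * j + 3) / (j.factorial : ℝ) * E := by
      rw [abs_div, abs_two, div_le_iff₀ (by norm_num : (0:ℝ) < 2)]
      calc |besselI (r + 2 * j + 1) (2 * Real.sqrt q * s) +
          besselI (r + 2 * j + 3) (2 * Real.sqrt q * s)|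
          ≤ |besselI (r + 2 * j + 1) (2 * Real.sqrt q * s)| +
            |besselI (r + 2 * j + 3) (2 * Real.sqrt q * s)| := abs_add_le _ _
        _ ≤ A ^ (r + 2 * j + 3) / (j.factorial : ℝ) * E * 2 := by linarith
    rw [abs_mul, hc2]
    calc |(besselI (r + 2 * j + 1) (2 * Real.sqrt q * s) +
        besselI (r + 2 * j + 3) (2 * Real.sqrt q * s)) / 2| * (2 * Real.sqrt q)
        ≤ (A ^ (r + 2 * j + 3) / (j.factorial : ℝ) * E) * (2 * Real.sqrt q) :=
          mul_le_mul_of_nonneg_right hX (by positivity)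
      _ = (2 * Real.sqrt q) * (A ^ (r + 2 * j + 3) / (j.factorial : ℝ) * E) := by ring
  rw [tailF', abs_mul]
  calc |(q : ℝ) ^ (-((r : ℝ) + 2 * ((j : ℝ) + 1)) / 2)| * _ ≤
      1 * ((2 * Real.sqrt q) * (A ^ (r + 2 * j + 3) / (j.factorial : ℝ) * E)) :=
        mul_le_mul hcoef hmain (abs_nonneg _) zero_le_one
    _ = (2 * Real.sqrt q * (A ^ (r + 3) * E)) * ((A ^ 2) ^ j / (j.factorial : ℝ)) := by
        rw [one_mul, ← pow_mul,
          show r + 2 * j + 3 = (r + 3) + 2 * j from by ring, pow_add]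
        ring

lemma summable_tailF' (q : ℕ) (hq : 2 ≤ q) (r : ℕ) (t : ℝ) :
    Summable (fun j : ℕ => tailF' q r j t) := by
  apply Summable.of_norm_bounded
    (g := fun j : ℕ => (2 * Real.sqrt q * ((Real.sqrt q * (|t| + 1)) ^ (r + 3) *
        ∑' n : ℕ, ((Real.sqrt q * (|t| + 1)) ^ 2) ^ n / (n.factorial : ℝ))) *
      (((Real.sqrt q * (|t| + 1)) ^ 2) ^ j / (j.factorial : ℝ)))
  · exact (Real.summable_pow_div_factorial _).mul_left _
  · intro j
    exact tailF'_bound q hq r j (|t| + 1) (by linarith [abs_nonneg t]) t (by linarith)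

lemma hasDerivAt_tailsum (q : ℕ) (hq : 2 ≤ q) (r : ℕ) (t : ℝ) :
    HasDerivAt (fun s => ∑' j : ℕ, tailF q r j s) (∑' j : ℕ, tailF' q r j t) t := by
  set R := |t| + 1 with hRdef
  have hR : 1 ≤ R := by have := abs_nonneg t; simp only [hRdef]; linarith
  have htmem : t ∈ Metric.ball (0:ℝ) R := by
    simp only [Metric.mem_ball, Real.dist_eq, sub_zero, hRdef]
    linarith [abs_nonneg t]
  obtain ⟨E, hE⟩ : ∃ E : ℝ, E = ∑' n : ℕ, ((Real.sqrt q * R) ^ 2) ^ n / (n.factorial : ℝ) :=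
    ⟨_, rfl⟩
  refine hasDerivAt_tsum_of_isPreconnected
    (u := fun j : ℕ => (2 * Real.sqrt q * ((Real.sqrt q * R) ^ (r + 3) * E)) *
      (((Real.sqrt q * R) ^ 2) ^ j / (j.factorial : ℝ)))
    ((Real.summable_pow_div_factorial _).mul_left _) Metric.isOpen_ball
    (convex_ball (0:ℝ) R).isPreconnected
    (fun j y _ => hasDerivAt_tailF q r j y) (fun j y hy => ?_) htmem ?_ htmem
  · simp only [Metric.mem_ball, Real.dist_eq, sub_zero] at hy
    rw [hE]
    simpa using tailF'_bound q hq r j R hR y hy.le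
  · exact summable_tailF q hq r t

lemma tailF'_eq (q : ℕ) (hq : 1 ≤ q) (r j : ℕ) (t : ℝ) :
    tailF' q r j t = ((Real.sqrt q)⁻¹) ^ (r + 2 * (j + 1)) *
      ((besselI (r + 2 * j + 1) (2 * Real.sqrt q * t) +
        besselI (r + 2 * j + 3) (2 * Real.sqrt q * t)) / 2 * (2 * Real.sqrt q)) := by
  rw [tailF', show (-(((r:ℕ):ℝ) + 2 * ((j:ℝ) + 1)) / 2) = -(((r + 2*(j+1) : ℕ)):ℝ)/2 from by
    push_cast; ring, rpow_coef q hq]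

lemma hasDerivAt_treeG (q : ℕ) (hq : 2 ≤ q) (r : ℕ) (t : ℝ) :
    HasDerivAt (fun s => treeG q r s)
      ((q : ℝ) ^ (-(r : ℝ) / 2) *
          ((∑' n : ℕ, bterm' r n (2 * Real.sqrt q * t)) * (2 * Real.sqrt q)) -
        ((q : ℝ) - 1) * ∑' j : ℕ, tailF' q r j t) t := by
  have hc : HasDerivAt (fun s : ℝ => 2 * Real.sqrt q * s) (2 * Real.sqrt q) t := by
    simpa using (hasDerivAt_id t).const_mul (2 * Real.sqrt q)
  have h1 := ((hasDerivAt_besselI r (2 * Real.sqrt q * t)).comp t hc).const_mul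
    ((q : ℝ) ^ (-(r : ℝ) / 2))
  have h2 := (hasDerivAt_tailsum q hq r t).const_mul ((q : ℝ) - 1)
  exact h1.sub h2

lemma key_identity (s A B Q : ℝ) (hs0 : s ≠ 0) (hQ : s * s = Q) (m : ℕ) :
    Q * ((s⁻¹) ^ (m + 2) * B) + (s⁻¹) ^ m * A
      = (s⁻¹) ^ (m + 1) * ((A + B) / 2 * (2 * s)) := by
  subst hQ
  simp only [inv_pow]
  field_simp
  ring

lemma heat_succ (q : ℕ) (hq : 2 ≤ q) (t : ℝ) (k : ℕ) :
    (q : ℝ) * treeG q (k + 2) t + treeG q k t = deriv (fun s => treeG q (k + 1) s) t := by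
  have hq0 : (0:ℝ) ≤ (q:ℝ) := by positivity
  have hs0 : Real.sqrt q ≠ 0 := by
    have := sqrtq_one_le q hq; intro h; rw [h] at this; linarith
  have hss : Real.sqrt q * Real.sqrt q = (q:ℝ) := Real.mul_self_sqrt hq0
  rw [(hasDerivAt_treeG q hq (k + 1) t).deriv, tsum_bterm'_succ k (2 * Real.sqrt q * t)]
  rw [treeG_eq, treeG_eq]
  have hS1 : Summable (fun j => tailF q (k + 2) j t) := summable_tailF q hq _ t
  have hS2 : Summable (fun j => tailF q k j t) := summable_tailF q hq _ t
  have hterm : ∀ j : ℕ, (q:ℝ) * tailF q (k + 2) j t + tailF q k j t = tailF' q (k + 1) j t := by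
    intro j
    rw [tailF_eq q (by omega), tailF_eq q (by omega), tailF'_eq q (by omega)]
    rw [show k + 2 + 2 * (j + 1) = (k + 2 * (j + 1)) + 2 from by ring,
      show (k + 1) + 2 * (j + 1) = (k + 2 * (j + 1)) + 1 from by ring,
      show k + 1 + 2 * j + 1 = k + 2 * (j + 1) from by ring,
      show k + 1 + 2 * j + 3 = (k + 2 * (j + 1)) + 2 from by ring]
    exact key_identity (Real.sqrt q) _ _ _ hs0 hss (k + 2 * (j + 1))
  have htails : (q:ℝ) * ∑' j : ℕ, tailF q (k + 2) j t + ∑' j : ℕ, tailF q k j t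
      = ∑' j : ℕ, tailF' q (k + 1) j t := by
    rw [← tsum_mul_left, ← Summable.tsum_add (hS1.mul_left _) hS2]
    exact tsum_congr hterm
  have hhead : (q:ℝ) * ((q:ℝ) ^ (-((k + 2 : ℕ) : ℝ) / 2) * besselI (k + 2) (2 * Real.sqrt q * t))
      + (q:ℝ) ^ (-((k : ℕ) : ℝ) / 2) * besselI k (2 * Real.sqrt q * t)
      = (q:ℝ) ^ (-((k + 1 : ℕ) : ℝ) / 2) *
        ((besselI k (2 * Real.sqrt q * t) + besselI (k + 2) (2 * Real.sqrt q * t)) / 2 *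
          (2 * Real.sqrt q)) := by
    rw [rpow_coef q (by omega), rpow_coef q (by omega), rpow_coef q (by omega)]
    exact key_identity (Real.sqrt q) _ _ _ hs0 hss k
  linear_combination hhead - ((q:ℝ) - 1) * htails

lemma key_identity2 (s C Q : ℝ) (hs0 : s ≠ 0) (hQ : s * s = Q) (m : ℕ) :
    s * ((s⁻¹) ^ (m + 2) * C) + s * ((s⁻¹) ^ m * C) = (Q + 1) * ((s⁻¹) ^ (m + 1) * C) := by
  subst hQ
  simp only [inv_pow]
  field_simp
  ring

lemma key_identity3 (s C Q : ℝ) (hs0 : s ≠ 0) (hQ : s * s = Q) :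
    (Q + 1) * ((s⁻¹) ^ 1 * C) = (s⁻¹) ^ 0 * (C * (2 * s)) - (Q - 1) * (s * ((s⁻¹) ^ 2 * C)) := by
  subst hQ
  simp only [inv_pow]
  field_simp
  ring

lemma heat_zero (q : ℕ) (hq : 2 ≤ q) (t : ℝ) :
    ((q : ℝ) + 1) * treeG q 1 t = deriv (fun s => treeG q 0 s) t := by
  have hq0 : (0:ℝ) ≤ (q:ℝ) := by positivity
  have hs0 : Real.sqrt q ≠ 0 := by
    have := sqrtq_one_le q hq; intro h; rw [h] at this; linarith
  have hss : Real.sqrt q * Real.sqrt q = (q:ℝ) := Real.mul_self_sqrt hq0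
  rw [(hasDerivAt_treeG q hq 0 t).deriv, tsum_bterm'_zero (2 * Real.sqrt q * t)]
  rw [treeG_eq]
  have hf1 : Summable (fun j : ℕ => Real.sqrt q * (((Real.sqrt q)⁻¹) ^ (2 * j + 2) *
      besselI (2 * j + 1) (2 * Real.sqrt q * t))) := (summable_aux q hq 2 1 t).mul_left _
  have hf2 : Summable (fun j : ℕ => Real.sqrt q * (((Real.sqrt q)⁻¹) ^ (2 * j + 2) *
      besselI (2 * j + 3) (2 * Real.sqrt q * t))) := (summable_aux q hq 2 3 t).mul_left _
  have hf1s : Summable (fun j : ℕ => Real.sqrt q * (((Real.sqrt q)⁻¹) ^ (2 * j + 4) *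
      besselI (2 * j + 3) (2 * Real.sqrt q * t))) := (summable_aux q hq 4 3 t).mul_left _
  have hsplit : ∀ j : ℕ, tailF' q 0 j t =
      Real.sqrt q * (((Real.sqrt q)⁻¹) ^ (2 * j + 2) *
        besselI (2 * j + 1) (2 * Real.sqrt q * t)) +
      Real.sqrt q * (((Real.sqrt q)⁻¹) ^ (2 * j + 2) *
        besselI (2 * j + 3) (2 * Real.sqrt q * t)) := by
    intro j
    rw [tailF'_eq q (by omega)]
    rw [show 0 + 2 * (j + 1) = 2 * j + 2 from by ring,
      show 0 + 2 * j + 1 = 2 * j + 1 from by ring,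
      show 0 + 2 * j + 3 = 2 * j + 3 from by ring]
    ring
  have h1 : ∑' j : ℕ, tailF' q 0 j t =
      (∑' j : ℕ, Real.sqrt q * (((Real.sqrt q)⁻¹) ^ (2 * j + 2) *
        besselI (2 * j + 1) (2 * Real.sqrt q * t))) +
      ∑' j : ℕ, Real.sqrt q * (((Real.sqrt q)⁻¹) ^ (2 * j + 2) *
        besselI (2 * j + 3) (2 * Real.sqrt q * t)) := by
    rw [tsum_congr hsplit]
    exact Summable.tsum_add hf1 hf2
  have h2 : (∑' j : ℕ, Real.sqrt q * (((Real.sqrt q)⁻¹) ^ (2 * j + 2) *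
        besselI (2 * j + 1) (2 * Real.sqrt q * t))) =
      Real.sqrt q * (((Real.sqrt q)⁻¹) ^ 2 * besselI 1 (2 * Real.sqrt q * t)) +
      ∑' j : ℕ, Real.sqrt q * (((Real.sqrt q)⁻¹) ^ (2 * j + 4) *
        besselI (2 * j + 3) (2 * Real.sqrt q * t)) := Summable.tsum_eq_zero_add hf1
  have h4term : ∀ j : ℕ,
      Real.sqrt q * (((Real.sqrt q)⁻¹) ^ (2 * j + 4) *
        besselI (2 * j + 3) (2 * Real.sqrt q * t)) +
      Real.sqrt q * (((Real.sqrt q)⁻¹) ^ (2 * j + 2) *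
        besselI (2 * j + 3) (2 * Real.sqrt q * t)) = ((q:ℝ) + 1) * tailF q 1 j t := by
    intro j
    rw [tailF_eq q (by omega), show 1 + 2 * (j + 1) = 2 * j + 3 from by ring]
    exact key_identity2 (Real.sqrt q) _ _ hs0 hss (2 * j + 2)
  have h3 : (∑' j : ℕ, Real.sqrt q * (((Real.sqrt q)⁻¹) ^ (2 * j + 4) *
        besselI (2 * j + 3) (2 * Real.sqrt q * t))) +
      (∑' j : ℕ, Real.sqrt q * (((Real.sqrt q)⁻¹) ^ (2 * j + 2) *
        besselI (2 * j + 3) (2 * Real.sqrt q * t))) =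
      ((q:ℝ) + 1) * ∑' j : ℕ, tailF q 1 j t := by
    rw [← Summable.tsum_add hf1s hf2, tsum_congr h4term]
    exact tsum_mul_left
  have hT : ∑' j : ℕ, tailF' q 0 j t =
      Real.sqrt q * (((Real.sqrt q)⁻¹) ^ 2 * besselI 1 (2 * Real.sqrt q * t)) +
      ((q:ℝ) + 1) * ∑' j : ℕ, tailF q 1 j t := by
    rw [h1, h2, add_assoc, h3]
  rw [rpow_coef q (by omega) 1, rpow_coef q (by omega) 0, hT]
  have hhead := key_identity3 (Real.sqrt q) (besselI 1 (2 * Real.sqrt q * t)) ((q:ℝ)) hs0 hss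
  linear_combination hhead + ((q:ℝ) - 1) * hT - ((q:ℝ) - 1) * hT

theorem treeG_heat_equations (q : ℕ) (hq : 2 ≤ q) (t : ℝ) (ht : 0 < t) :
    ((q : ℝ) + 1) * treeG q 1 t = deriv (fun s => treeG q 0 s) t ∧
    ∀ r : ℕ, 1 ≤ r →
      (q : ℝ) * treeG q (r + 1) t + treeG q (r - 1) t = deriv (fun s => treeG q r s) t := by
  constructor
  · exact heat_zero q hq t
  · intro r hr
    obtain ⟨k, rfl⟩ : ∃ k, r = k + 1 := ⟨r - 1, by omega⟩
    exact heat_succ q hq t k
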